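/- For Hilbert A-modules H, K over a C*-algebra A and an adjointable operator T : H → K, T is surjective if and only if T* is bounded below with respect to the inner product, i.e., there exists m > 0 such that ⟨T*x, T*x⟩ ≥ m⟨x,x⟩ for all x ∈ K. -/

import Mathlib

open scoped RightActions

/-- The pre-2025 Mathlib notion of a Hilbert C⋆-module: a *right* `A`-module `E`
(action of `Aᵐᵒᵖ`), with an `A`-valued inner product linear in the second argument,
`⟪x, y <• a⟫ = ⟪x, y⟫ * a`. (Mathlib's `CStarModule` now uses left modules.) -/
class CStarModuleRight (A E : Type*) [NonUnitalSemiring A] [StarRing A] [Module ℂ A]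
    [AddCommGroup E] [Module ℂ E] [PartialOrder A] [SMul Aᵐᵒᵖ E] [Norm A] [Norm E]
    extends Inner A E where
  inner_add_right {x} {y} {z} : inner x (y + z) = inner x y + inner x z
  inner_self_nonneg {x} : 0 ≤ inner x x
  inner_self {x} : inner x x = 0 ↔ x = 0
  inner_op_smul_right {a : A} {x y : E} : inner x (y <• a) = inner x y * a
  inner_smul_right_complex {z : ℂ} {x} {y} : inner x (z • y) = z • inner x y
  star_inner x y : star (inner x y) = inner y x
  norm_eq_sqrt_norm_inner_self x : ‖x‖ = Real.sqrt ‖inner x x‖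

noncomputable section
set_option linter.unusedSectionVars false

namespace CStarModuleRight

variable {A E : Type*} [CStarAlgebra A] [PartialOrder A] [StarOrderedRing A]
  [NormedAddCommGroup E] [NormedSpace ℂ E] [SMul Aᵐᵒᵖ E] [CStarModuleRight A E]

attribute [simp] CStarModuleRight.inner_add_right CStarModuleRight.star_inner
  CStarModuleRight.inner_op_smul_right CStarModuleRight.inner_smul_right_complex

@[simp]
lemma inner_add_left {x y z : E} : inner A (x + y) z = inner A x z + inner A y z := by
  rw [← star_star (r := inner A (x + y) z)]
  simp only [CStarModuleRight.inner_add_right, star_add, CStarModuleRight.star_inner]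

@[simp]
lemma inner_op_smul_left {a : A} {x y : E} : inner A (x <• a) y = star a * inner A x y := by
  rw [← CStarModuleRight.star_inner]; simp

@[simp]
lemma inner_smul_left_complex {z : ℂ} {x y : E} : inner A (z • x) y = star z • inner A x y := by
  rw [← CStarModuleRight.star_inner]
  simp

@[simp]
lemma inner_smul_left_real {z : ℝ} {x y : E} : inner A (z • x) y = z • inner A x y := by
  have h₁ : z • x = (z : ℂ) • x := by simp
  rw [h₁, ← CStarModuleRight.star_inner, CStarModuleRight.inner_smul_right_complex]
  simp

@[simp]
lemma inner_smul_right_real {z : ℝ} {x y : E} : inner A x (z • y) = z • inner A x y := by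
  have h₁ : z • y = (z : ℂ) • y := by simp
  rw [h₁, ← CStarModuleRight.star_inner, inner_smul_left_complex]
  simp

/-- The inner product as a sesquilinear map. -/
def innerₛₗ : E →ₗ⋆[ℂ] E →ₗ[ℂ] A where
  toFun x := { toFun := fun y => inner A x y
               map_add' := fun z y => by simp
               map_smul' := fun z y => by simp }
  map_add' z y := by ext; simp
  map_smul' z y := by ext; simp

lemma innerₛₗ_apply {x y : E} : innerₛₗ x y = inner A x y := rfl

@[simp] lemma inner_zero_right {x : E} : inner A x 0 = 0 := by simp [← innerₛₗ_apply]
@[simp] lemma inner_zero_left {x : E} : inner A 0 x = 0 := by simp [← innerₛₗ_apply]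
@[simp] lemma inner_neg_right {x y : E} : inner A x (-y) = -inner A x y := by
  simp [← innerₛₗ_apply]
@[simp] lemma inner_neg_left {x y : E} : inner A (-x) y = -inner A x y := by
  simp [← innerₛₗ_apply]
@[simp] lemma inner_sub_right {x y z : E} : inner A x (y - z) = inner A x y - inner A x z := by
  simp [← innerₛₗ_apply]
@[simp] lemma inner_sub_left {x y z : E} : inner A (x - y) z = inner A x z - inner A y z := by
  simp [← innerₛₗ_apply]

lemma norm_sq_eq {x : E} : ‖x‖ ^ 2 = ‖inner A x x‖ := by
  rw [CStarModuleRight.norm_eq_sqrt_norm_inner_self (A := A) x, Real.sq_sqrt (norm_nonneg _)]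

lemma inner_mul_inner_swap_le {x y : E} :
    inner A y x * inner A x y ≤ ‖x‖ ^ 2 • inner A y y := by
  rcases eq_or_ne x 0 with h | h
  · simp [h]
  · have h₁ : ∀ (a : A),
        (0 : A) ≤ ‖x‖ ^ 2 • (star a * a) - ‖x‖ ^ 2 • (star a * inner A x y)
                  - ‖x‖ ^ 2 • (inner A y x * a) + ‖x‖ ^ 2 • (‖x‖ ^ 2 • inner A y y) := fun a => by
      calc (0 : A) ≤ inner A (x <• a - ‖x‖ ^ 2 • y) (x <• a - ‖x‖ ^ 2 • y) := CStarModuleRight.inner_self_nonneg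
        _ = star a * inner A x x * a - ‖x‖ ^ 2 • (star a * inner A x y)
                  - ‖x‖ ^ 2 • (inner A y x * a) + ‖x‖ ^ 2 • (‖x‖ ^ 2 • inner A y y) := by
                      simp only [inner_sub_right, CStarModuleRight.inner_op_smul_right,
                        inner_sub_left, inner_op_smul_left, inner_smul_left_real,
                        inner_smul_right_real, smul_sub, sub_mul, smul_mul_assoc, mul_assoc]
                      abel
        _ ≤ ‖x‖ ^ 2 • (star a * a) - ‖x‖ ^ 2 • (star a * inner A x y)
                  - ‖x‖ ^ 2 • (inner A y x * a) + ‖x‖ ^ 2 • (‖x‖ ^ 2 • inner A y y) := by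
                      gcongr
                      calc _ ≤ ‖inner A x x‖ • (star a * a) :=
                          CStarAlgebra.star_left_conjugate_le_norm_smul
                            (CStarModuleRight.star_inner x x)
                        _ = (√‖inner A x x‖) ^ 2 • (star a * a) := by
                          rw [Real.sq_sqrt]
                          positivity
                        _ = ‖x‖ ^ 2 • (star a * a) := by
                          rw [← CStarModuleRight.norm_eq_sqrt_norm_inner_self]
    specialize h₁ (inner A x y)
    simp only [CStarModuleRight.star_inner, sub_self, zero_sub, le_neg_add_iff_add_le,
      add_zero] at h₁
    rwa [smul_le_smul_iff_of_pos_left (pow_pos (norm_pos_iff.mpr h) _)] at h₁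

variable (E) in
lemma norm_inner_le {x y : E} : ‖inner A x y‖ ≤ ‖x‖ * ‖y‖ := by
  have := calc ‖inner A x y‖ ^ 2 = ‖inner A y x * inner A x y‖ := by
                rw [← CStarModuleRight.star_inner x y, CStarRing.norm_star_mul_self, pow_two]
    _ ≤ ‖‖x‖ ^ 2 • inner A y y‖ := by
                refine CStarAlgebra.norm_le_norm_of_nonneg_of_le ?_ inner_mul_inner_swap_le
                rw [← CStarModuleRight.star_inner x y]
                exact star_mul_self_nonneg _
    _ = ‖x‖ ^ 2 * ‖inner A y y‖ := by simp [norm_smul]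
    _ = ‖x‖ ^ 2 * ‖y‖ ^ 2 := by rw [norm_sq_eq (A := A) (x := y)]
    _ = (‖x‖ * ‖y‖) ^ 2 := by rw [mul_pow]
  exact (pow_le_pow_iff_left₀ (norm_nonneg _) (by positivity) (by norm_num)).mp this

/-- The inner product as a continuous sesquilinear map. -/
def innerSL : E →L⋆[ℂ] E →L[ℂ] A :=
  LinearMap.mkContinuous₂ (innerₛₗ : E →ₗ⋆[ℂ] E →ₗ[ℂ] A) 1 <| fun x y => by
    simp [innerₛₗ_apply, norm_inner_le E]

lemma innerSL_apply {x y : E} : innerSL (A := A) x y = inner A x y := rfl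

lemma continuous_inner : Continuous (fun x : E × E => inner A x.1 x.2) := by
  simp_rw [← innerSL_apply]
  fun_prop

end CStarModuleRight

section Adj11

variable (A K : Type*) [CStarAlgebra A] [PartialOrder A] [StarOrderedRing A]
  [NormedAddCommGroup K] [NormedSpace ℂ K] [CompleteSpace K]
  [SMul Aᵐᵒᵖ K] [CStarModuleRight A K]

local notation "⟪" x ", " y "⟫" => (inner A x y : A)

/-- Adjointable operators on a Hilbert C*-module `K`. -/
structure Adj11 where
  a : K →L[ℂ] K
  b : K →L[ℂ] K
  adj : ∀ x y, ⟪a x, y⟫ = ⟪x, b y⟫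

namespace Adj11

variable {A K}

lemma right_ext {y z : K} (h : ∀ x : K, ⟪x, y⟫ = ⟪x, z⟫) : y = z := by
  have h2 : ∀ x : K, ⟪x, y - z⟫ = 0 := by
    intro x; rw [CStarModuleRight.inner_sub_right, h x, sub_self]
  have := h2 (y - z)
  rw [CStarModuleRight.inner_self] at this
  rwa [sub_eq_zero] at this

@[ext] lemma ext {S R : Adj11 A K} (h : S.a = R.a) : S = R := by
  obtain ⟨a, b, hab⟩ := S
  obtain ⟨a', b', hab'⟩ := R
  simp only at h
  subst h
  have : b = b' := by
    ext y
    refine right_ext (A := A) fun x => ?_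
    rw [← hab, ← hab']
  subst this
  rfl

lemma adj' (S : Adj11 A K) (x y : K) : ⟪S.b x, y⟫ = ⟪x, S.a y⟫ := by
  have := congrArg star (S.adj y x)
  simpa using this.symm

instance : Zero (Adj11 A K) := ⟨⟨0, 0, by simp⟩⟩
instance : One (Adj11 A K) := ⟨⟨1, 1, by simp⟩⟩
instance : Add (Adj11 A K) :=
  ⟨fun S R => ⟨S.a + R.a, S.b + R.b, fun x y => by
    simp [ContinuousLinearMap.add_apply, S.adj, R.adj]⟩⟩
instance : Neg (Adj11 A K) :=
  ⟨fun S => ⟨-S.a, -S.b, fun x y => by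
    simp [ContinuousLinearMap.neg_apply, S.adj]⟩⟩
instance : Sub (Adj11 A K) :=
  ⟨fun S R => ⟨S.a - R.a, S.b - R.b, fun x y => by
    simp [ContinuousLinearMap.sub_apply, S.adj, R.adj]⟩⟩
instance : Mul (Adj11 A K) :=
  ⟨fun S R => ⟨S.a * R.a, R.b * S.b, fun x y => by
    simp only [ContinuousLinearMap.mul_apply, S.adj, R.adj]⟩⟩
instance : SMul ℂ (Adj11 A K) :=
  ⟨fun z S => ⟨z • S.a, star z • S.b, fun x y => by
    simp [ContinuousLinearMap.smul_apply, CStarModuleRight.inner_smul_left_complex, S.adj]⟩⟩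
instance : SMul ℕ (Adj11 A K) := ⟨fun n S => ⟨n • S.a, n • S.b, fun x y => by
    simp [ContinuousLinearMap.smul_apply, CStarModuleRight.inner_smul_left_real,
      CStarModuleRight.inner_smul_right_real, ← Nat.cast_smul_eq_nsmul ℝ, S.adj]⟩⟩
instance : SMul ℤ (Adj11 A K) := ⟨fun n S => ⟨n • S.a, n • S.b, fun x y => by
    simp [ContinuousLinearMap.smul_apply, CStarModuleRight.inner_smul_left_real,
      CStarModuleRight.inner_smul_right_real, ← Int.cast_smul_eq_zsmul ℝ, S.adj]⟩⟩
instance : Pow (Adj11 A K) ℕ :=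
  ⟨fun S n => ⟨S.a ^ n, S.b ^ n, fun x y => by
    induction n generalizing x y with
    | zero => simp
    | succ k ih =>
      rw [pow_succ, pow_succ']
      simp only [ContinuousLinearMap.mul_apply, S.adj, ih]⟩⟩
instance : NatCast (Adj11 A K) := ⟨fun n => ⟨n, n, fun x y => by
    simp only [ContinuousLinearMap.natCast_apply]
    simp [← Nat.cast_smul_eq_nsmul ℝ, CStarModuleRight.inner_smul_left_real,
      CStarModuleRight.inner_smul_right_real]⟩⟩
instance : IntCast (Adj11 A K) := ⟨fun n => ⟨n, n, fun x y => by
    simp only [ContinuousLinearMap.intCast_apply]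
    simp [← Int.cast_smul_eq_zsmul ℝ, CStarModuleRight.inner_smul_left_real,
      CStarModuleRight.inner_smul_right_real]⟩⟩

@[simp] lemma zero_a : (0 : Adj11 A K).a = 0 := rfl
@[simp] lemma one_a : (1 : Adj11 A K).a = 1 := rfl
@[simp] lemma add_a (S R : Adj11 A K) : (S + R).a = S.a + R.a := rfl
@[simp] lemma neg_a (S : Adj11 A K) : (-S).a = -S.a := rfl
@[simp] lemma sub_a (S R : Adj11 A K) : (S - R).a = S.a - R.a := rfl
@[simp] lemma mul_a (S R : Adj11 A K) : (S * R).a = S.a * R.a := rfl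
@[simp] lemma smul_a (z : ℂ) (S : Adj11 A K) : (z • S).a = z • S.a := rfl
@[simp] lemma zero_b : (0 : Adj11 A K).b = 0 := rfl
@[simp] lemma one_b : (1 : Adj11 A K).b = 1 := rfl
@[simp] lemma add_b (S R : Adj11 A K) : (S + R).b = S.b + R.b := rfl
@[simp] lemma sub_b (S R : Adj11 A K) : (S - R).b = S.b - R.b := rfl
@[simp] lemma mul_b (S R : Adj11 A K) : (S * R).b = R.b * S.b := rfl

instance : Ring (Adj11 A K) :=
  Function.Injective.ring (fun S : Adj11 A K => S.a)
    (fun S R h => ext h) rfl rfl (fun _ _ => rfl) (fun _ _ => rfl) (fun _ => rfl)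
    (fun _ _ => rfl) (fun _ _ => rfl) (fun _ _ => rfl) (fun _ _ => rfl)
    (fun _ => rfl) (fun _ => rfl)

instance : Module ℂ (Adj11 A K) :=
  Function.Injective.module ℂ
    { toFun := fun S : Adj11 A K => S.a, map_add' := fun _ _ => rfl, map_zero' := rfl }
    (fun S R h => ext h) (fun _ _ => rfl)

instance : Algebra ℂ (Adj11 A K) :=
  Algebra.ofModule (fun z S R => by ext : 1; exact smul_mul_assoc z S.a R.a)
    (fun z S R => by ext : 1; show S.a * (z • R.a) = z • (S.a * R.a); exact mul_smul_comm z S.a R.a)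

instance : StarRing (Adj11 A K) where
  star S := ⟨S.b, S.a, S.adj'⟩
  star_involutive S := rfl
  star_mul S R := rfl
  star_add S R := rfl

@[simp] lemma star_a (S : Adj11 A K) : (star S).a = S.b := rfl
@[simp] lemma star_b (S : Adj11 A K) : (star S).b = S.a := rfl

instance : StarModule ℂ (Adj11 A K) where
  star_smul z S := by ext : 1; rfl


/-- The embedding into bounded operators as a ring hom. -/
def aHom : Adj11 A K →+* (K →L[ℂ] K) where
  toFun S := S.a
  map_one' := rfl
  map_mul' _ _ := rfl
  map_zero' := rfl
  map_add' _ _ := rfl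

lemma aHom_injective : Function.Injective (aHom (A := A) (K := K)) := fun _ _ h => ext h

instance : NormedRing (Adj11 A K) := NormedRing.induced _ _ (aHom (A := A) (K := K)) aHom_injective

lemma norm_def (S : Adj11 A K) : ‖S‖ = ‖S.a‖ := rfl

instance : NormedAlgebra ℂ (Adj11 A K) where
  norm_smul_le z S := norm_smul_le z S.a

lemma norm_b_le (S : Adj11 A K) : ‖S.b‖ ≤ ‖S.a‖ := by
  refine ContinuousLinearMap.opNorm_le_bound _ (norm_nonneg _) fun x => ?_
  rcases eq_or_ne (S.b x) 0 with h | h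
  · simp [h]; positivity
  · have h1 : ‖S.b x‖ ^ 2 = ‖⟪S.b x, S.b x⟫‖ := CStarModuleRight.norm_sq_eq
    have h2 : (⟪S.b x, S.b x⟫ : A) = ⟪x, S.a (S.b x)⟫ := S.adj' x (S.b x) ▸ by rw [S.adj']
    have h3 : ‖(⟪x, S.a (S.b x)⟫ : A)‖ ≤ ‖x‖ * (‖S.a‖ * ‖S.b x‖) := by
      refine le_trans (CStarModuleRight.norm_inner_le K) ?_
      gcongr
      exact S.a.le_opNorm _
    have h4 : ‖S.b x‖ * ‖S.b x‖ ≤ (‖S.a‖ * ‖x‖) * ‖S.b x‖ := by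
      rw [← sq, h1, h2]; calc ‖(⟪x, S.a (S.b x)⟫ : A)‖ ≤ ‖x‖ * (‖S.a‖ * ‖S.b x‖) := h3
        _ = (‖S.a‖ * ‖x‖) * ‖S.b x‖ := by ring
    exact le_of_mul_le_mul_right h4 (norm_pos_iff.mpr h)

lemma norm_b_eq (S : Adj11 A K) : ‖S.b‖ = ‖S.a‖ :=
  le_antisymm (norm_b_le S) (norm_b_le (star S))

lemma norm_star (S : Adj11 A K) : ‖star S‖ = ‖S‖ := norm_b_eq S

lemma dist_def (S R : Adj11 A K) : dist S R = ‖S.a - R.a‖ := by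
  rw [dist_eq_norm]; rfl

instance : CompleteSpace (Adj11 A K) := by
  refine Metric.complete_of_cauchySeq_tendsto fun u hu => ?_
  have keya : ∀ n m : ℕ, dist (u n).a (u m).a = dist (u n) (u m) := fun n m => by
    rw [dist_def, dist_eq_norm]
  have keyb : ∀ n m : ℕ, dist (u n).b (u m).b = dist (u n) (u m) := fun n m => by
    rw [dist_def, dist_eq_norm]
    calc ‖(u n).b - (u m).b‖ = ‖(u n - u m).b‖ := by rw [sub_b]
      _ = ‖(u n - u m).a‖ := norm_b_eq _
      _ = ‖(u n).a - (u m).a‖ := by rw [sub_a]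
  have hua : CauchySeq fun n => (u n).a := by
    rw [Metric.cauchySeq_iff] at hu ⊢
    intro ε hε
    obtain ⟨N, hN⟩ := hu ε hε
    exact ⟨N, fun m hm n hn => (keya m n) ▸ hN m hm n hn⟩
  have hub : CauchySeq fun n => (u n).b := by
    rw [Metric.cauchySeq_iff] at hu ⊢
    intro ε hε
    obtain ⟨N, hN⟩ := hu ε hε
    exact ⟨N, fun m hm n hn => (keyb m n) ▸ hN m hm n hn⟩
  obtain ⟨la, hla⟩ := cauchySeq_tendsto_of_complete hua
  obtain ⟨lb, hlb⟩ := cauchySeq_tendsto_of_complete hub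
  have happly : ∀ (x : K), Filter.Tendsto (fun n => (u n).a x) Filter.atTop (nhds (la x)) :=
    fun x => ((ContinuousLinearMap.apply ℂ K x).continuous.tendsto _).comp hla
  have happly' : ∀ (y : K), Filter.Tendsto (fun n => (u n).b y) Filter.atTop (nhds (lb y)) :=
    fun y => ((ContinuousLinearMap.apply ℂ K y).continuous.tendsto _).comp hlb
  have hadj : ∀ x y : K, ⟪la x, y⟫ = ⟪x, lb y⟫ := by
    intro x y
    have t1 : Filter.Tendsto (fun n => (⟪(u n).a x, y⟫ : A)) Filter.atTop (nhds ⟪la x, y⟫) := by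
      have : Continuous fun p : K => (⟪p, y⟫ : A) :=
        CStarModuleRight.continuous_inner.comp (continuous_id.prodMk continuous_const)
      exact (this.tendsto _).comp (happly x)
    have t2 : Filter.Tendsto (fun n => (⟪x, (u n).b y⟫ : A)) Filter.atTop (nhds ⟪x, lb y⟫) := by
      have : Continuous fun p : K => (⟪x, p⟫ : A) :=
        CStarModuleRight.continuous_inner.comp (continuous_const.prodMk continuous_id)
      exact (this.tendsto _).comp (happly' y)
    have : (fun n => (⟪(u n).a x, y⟫ : A)) = fun n => (⟪x, (u n).b y⟫ : A) := by
      funext n; exact (u n).adj x y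
    rw [this] at t1
    exact tendsto_nhds_unique t1 t2
  refine ⟨⟨la, lb, hadj⟩, ?_⟩
  rw [Metric.tendsto_atTop] at hla ⊢
  intro ε hε
  obtain ⟨N, hN⟩ := hla ε hε
  refine ⟨N, fun n hn => ?_⟩
  have := hN n hn
  rwa [show dist (u n) ⟨la, lb, hadj⟩ = dist (u n).a la from by rw [dist_def, dist_eq_norm]]

instance : CStarRing (Adj11 A K) where
  norm_mul_self_le S := by
    have key : ∀ x : K, ‖S.a x‖ ≤ Real.sqrt ‖star S * S‖ * ‖x‖ := by
      intro x
      have h1 : ‖S.a x‖ ^ 2 = ‖(⟪S.a x, S.a x⟫ : A)‖ := CStarModuleRight.norm_sq_eq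
      have h2 : (⟪S.a x, S.a x⟫ : A) = ⟪x, (star S * S).a x⟫ := by
        rw [S.adj]; rfl
      have h3 : ‖(⟪x, (star S * S).a x⟫ : A)‖ ≤ ‖x‖ * (‖star S * S‖ * ‖x‖) := by
        refine le_trans (CStarModuleRight.norm_inner_le K) ?_
        gcongr
        exact ((star S * S).a).le_opNorm x
      have h4 : ‖S.a x‖ ^ 2 ≤ ‖star S * S‖ * ‖x‖ ^ 2 := by
        rw [h1, h2]; calc ‖(⟪x, (star S * S).a x⟫ : A)‖ ≤ ‖x‖ * (‖star S * S‖ * ‖x‖) := h3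
          _ = ‖star S * S‖ * ‖x‖ ^ 2 := by ring
      calc ‖S.a x‖ = Real.sqrt (‖S.a x‖ ^ 2) := by rw [Real.sqrt_sq (norm_nonneg _)]
        _ ≤ Real.sqrt (‖star S * S‖ * ‖x‖ ^ 2) := Real.sqrt_le_sqrt h4
        _ = Real.sqrt ‖star S * S‖ * ‖x‖ := by
            rw [Real.sqrt_mul (norm_nonneg _), Real.sqrt_sq (norm_nonneg _)]
    have hS : ‖S‖ ≤ Real.sqrt ‖star S * S‖ :=
      ContinuousLinearMap.opNorm_le_bound _ (Real.sqrt_nonneg _) key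
    calc ‖S‖ * ‖S‖ ≤ Real.sqrt ‖star S * S‖ * Real.sqrt ‖star S * S‖ :=
          mul_le_mul hS hS (norm_nonneg _) (Real.sqrt_nonneg _)
      _ = ‖star S * S‖ := Real.mul_self_sqrt (norm_nonneg _)

instance : CStarAlgebra (Adj11 A K) where

instance : PartialOrder (Adj11 A K) := CStarAlgebra.spectralOrder _
instance : StarOrderedRing (Adj11 A K) := CStarAlgebra.spectralOrderedRing _


lemma smul_one_a (m : ℝ) (x : K) : ((m • (1 : Adj11 A K)).a) x = (m : ℂ) • x := by
  have : m • (1 : Adj11 A K) = (m : ℂ) • 1 := by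
    rw [← Complex.coe_smul]
  rw [this]
  simp only [smul_a, one_a, ContinuousLinearMap.smul_apply, ContinuousLinearMap.one_apply]

/-- If `0 ≤ S` as an element of the C*-algebra of adjointable operators, then the quadratic
form of `S` is pointwise nonneg. -/
lemma form_nonneg_of_nonneg {S : Adj11 A K} (hS : 0 ≤ S) (x : K) : 0 ≤ ⟪S.a x, x⟫ := by
  set r := CFC.sqrt S with hr
  have hr0 : 0 ≤ r := CFC.sqrt_nonneg _
  have hrr : r * r = S := CFC.sqrt_mul_sqrt_self S hS
  have hrb : r.b = r.a := congrArg Adj11.a (IsSelfAdjoint.of_nonneg hr0).star_eq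
  have h1 : (⟪S.a x, x⟫ : A) = ⟪r.a x, r.a x⟫ := by
    rw [← hrr]
    show (⟪r.a (r.a x), x⟫ : A) = _
    rw [r.adj, hrb]
  rw [h1]
  exact CStarModuleRight.inner_self_nonneg

/-- Conversely, a selfadjoint adjointable operator with nonneg quadratic form is nonneg. -/
lemma nonneg_of_form {S : Adj11 A K} (hS : IsSelfAdjoint S)
    (h : ∀ x : K, 0 ≤ ⟪S.a x, x⟫) : 0 ≤ S := by
  rw [← CFC.negPart_eq_zero_iff S hS]
  set N := S⁻ with hN
  have hN0 : 0 ≤ N := CFC.negPart_nonneg S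
  have hNsa : IsSelfAdjoint N := .of_nonneg hN0
  have hNb : N.b = N.a := congrArg Adj11.a hNsa.star_eq
  have hSN : N * S * N = -(N ^ 3) := by
    have h1 : S * N = -(N * N) := by
      conv_lhs => rw [← CFC.posPart_sub_negPart S hS]
      rw [sub_mul, CFC.posPart_mul_negPart, zero_sub, ← hN]
    calc N * S * N = N * (S * N) := by rw [mul_assoc]
      _ = N * (-(N * N)) := by rw [h1]
      _ = -(N ^ 3) := by rw [mul_neg, pow_succ, pow_two, ← mul_assoc]
  -- the quadratic form of N ^ 3 vanishes
  have hform : ∀ x : K, (⟪(N ^ 3).a x, x⟫ : A) = 0 := by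
    intro x
    have hle : (0 : A) ≤ -⟪(N ^ 3).a x, x⟫ := by
      have h2 : (⟪S.a (N.a x), N.a x⟫ : A) = ⟪(N * S * N).a x, x⟫ := by
        have : (⟪S.a (N.a x), N.a x⟫ : A) = ⟪N.b (S.a (N.a x)), x⟫ := (N.adj' _ _).symm
        rw [this, hNb]; rfl
      have h3 := h (N.a x)
      rw [h2, hSN] at h3
      simpa using h3
    have hge : (0 : A) ≤ ⟪(N ^ 3).a x, x⟫ :=
      form_nonneg_of_nonneg (CStarAlgebra.pow_nonneg hN0 3) x
    exact le_antisymm (neg_nonneg.mp hle) hge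
  -- hence N ^ 3 = 0
  have hN3 : N ^ 3 = 0 := by
    set R := CFC.sqrt (N ^ 3) with hR
    have hR0 : 0 ≤ R := CFC.sqrt_nonneg _
    have hRR : R * R = N ^ 3 := CFC.sqrt_mul_sqrt_self _ (CStarAlgebra.pow_nonneg hN0 3)
    have hRb : R.b = R.a := congrArg Adj11.a (IsSelfAdjoint.of_nonneg hR0).star_eq
    have hRzero : R = 0 := by
      ext x
      have h4 : (⟪R.a x, R.a x⟫ : A) = ⟪(N ^ 3).a x, x⟫ := by
        rw [← hRR]
        have h6 := R.adj' (R.a x) x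
        rw [hRb] at h6
        exact h6.symm
      have h5 : (⟪R.a x, R.a x⟫ : A) = 0 := by rw [h4, hform]
      rw [CStarModuleRight.inner_self] at h5
      simpa using h5
    rw [← hRR, hRzero, mul_zero]
  -- and then N = 0 by the C*-identity
  have h4 : ‖N‖ ^ 4 = 0 := by
    have e1 : ‖N * N‖ = ‖N‖ * ‖N‖ := by
      nth_rewrite 1 [← hNsa.star_eq]
      exact CStarRing.norm_star_mul_self
    have e2 : ‖(N * N) * (N * N)‖ = ‖N * N‖ * ‖N * N‖ := by
      have hsq : star (N * N) = N * N := by rw [star_mul, hNsa.star_eq]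
      nth_rewrite 1 [← hsq]
      exact CStarRing.norm_star_mul_self
    have e3 : (N * N) * (N * N) = N ^ 3 * N := by noncomm_ring
    have : ‖N ^ 3 * N‖ = 0 := by rw [hN3, zero_mul, norm_zero]
    calc ‖N‖ ^ 4 = ‖N * N‖ * ‖N * N‖ := by rw [e1]; ring
      _ = ‖(N * N) * (N * N)‖ := e2.symm
      _ = 0 := by rw [e3, this]
  have : ‖N‖ = 0 := by
    have := pow_eq_zero_iff (n := 4) (by norm_num) |>.mp h4
    exact this
  exact norm_eq_zero.mp this

end Adj11

end Adj11
end

/-- an adjointable operator `T : H → K` between Hilbert `A`-modules is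
surjective iff `T*` is bounded below with respect to the inner product, i.e. there
is `m > 0` with `⟨T*x, T*x⟩ ≥ m⟨x, x⟩` for all `x ∈ K`. -/
theorem stmt_11
    {A : Type*} [CStarAlgebra A] [PartialOrder A] [StarOrderedRing A]
    {H : Type*} [NormedAddCommGroup H] [NormedSpace ℂ H] [CompleteSpace H]
    [SMul Aᵐᵒᵖ H] [CStarModuleRight A H]
    {K : Type*} [NormedAddCommGroup K] [NormedSpace ℂ K] [CompleteSpace K]
    [SMul Aᵐᵒᵖ K] [CStarModuleRight A K]
    (T : H →L[ℂ] K) (Ts : K →L[ℂ] H)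
    (hT : ∀ (x : H) (y : K), (inner A (T x) y : A) = inner A x (Ts y)) :
    Function.Surjective T ↔
      ∃ m : ℝ, 0 < m ∧ ∀ x : K, m • (inner A x x : A) ≤ inner A (Ts x) (Ts x) := by
  rcases subsingleton_or_nontrivial K with hK | hK
  · constructor
    · intro _
      refine ⟨1, one_pos, fun x => ?_⟩
      have hx : x = 0 := Subsingleton.elim x 0
      subst hx
      simp
    · intro _ y
      exact ⟨0, Subsingleton.elim _ _⟩
  · have hadj : ∀ x y : K, (inner A (T (Ts x)) y : A) = inner A x (T (Ts y)) := by
      intro x y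
      calc (inner A (T (Ts x)) y : A) = inner A (Ts x) (Ts y) := hT (Ts x) y
        _ = star (inner A (Ts y) (Ts x) : A) := (CStarModuleRight.star_inner _ _).symm
        _ = star (inner A (T (Ts y)) x : A) := by rw [hT (Ts y) x]
        _ = inner A x (T (Ts y)) := CStarModuleRight.star_inner _ _
    set S : Adj11 A K := ⟨T.comp Ts, T.comp Ts, fun x y => hadj x y⟩ with hSdef
    have hSsa : IsSelfAdjoint S := by ext : 1; rfl
    have hform : ∀ x : K, (inner A (S.a x) x : A) = inner A (Ts x) (Ts x) := fun x => hT (Ts x) x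
    have hformA : ∀ (R : Adj11 A K) (x : K),
        (inner A ((S - R).a x) x : A) = inner A (Ts x) (Ts x) - inner A (R.a x) x := by
      intro R x
      rw [Adj11.sub_a, ContinuousLinearMap.sub_apply, CStarModuleRight.inner_sub_left, hform]
    have hsmul1 : ∀ (r : ℝ) (x : K), (inner A ((r • (1 : Adj11 A K)).a x) x : A) = r • inner A x x := by
      intro r x
      rw [Adj11.smul_one_a, CStarModuleRight.inner_smul_left_complex, Complex.star_def,
        Complex.conj_ofReal, Complex.coe_smul]
    haveI : Nontrivial (Adj11 A K) := by
      obtain ⟨x, y, hxy⟩ := exists_pair_ne K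
      refine ⟨1, 0, fun h => hxy ?_⟩
      have hx := congrArg (fun (R : Adj11 A K) => R.a (x - y)) h
      simp only [Adj11.one_a, Adj11.zero_a, ContinuousLinearMap.one_apply,
        ContinuousLinearMap.zero_apply] at hx
      exact sub_eq_zero.mp hx
    constructor
    · intro hsurj
      obtain ⟨C, hC, hpre⟩ := T.exists_preimage_norm_le hsurj
      have hlow : ∀ y : K, ‖y‖ ≤ C ^ 2 * ‖S.a y‖ := by
        intro y
        obtain ⟨x, hx, hxn⟩ := hpre y
        have h1 : ‖y‖ ^ 2 ≤ C * ‖y‖ * ‖Ts y‖ := by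
          have e2 : (inner A y y : A) = inner A x (Ts y) := by rw [← hT x y, hx]
          calc ‖y‖ ^ 2 = ‖(inner A y y : A)‖ := CStarModuleRight.norm_sq_eq
            _ = ‖(inner A x (Ts y) : A)‖ := by rw [e2]
            _ ≤ ‖x‖ * ‖Ts y‖ := CStarModuleRight.norm_inner_le H
            _ ≤ (C * ‖y‖) * ‖Ts y‖ := by gcongr
        have h2 : ‖Ts y‖ ^ 2 ≤ ‖S.a y‖ * ‖y‖ := by
          calc ‖Ts y‖ ^ 2 = ‖(inner A (Ts y) (Ts y) : A)‖ := CStarModuleRight.norm_sq_eq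
            _ = ‖(inner A (S.a y) y : A)‖ := by rw [hform]
            _ ≤ ‖S.a y‖ * ‖y‖ := CStarModuleRight.norm_inner_le K
        rcases eq_or_ne y 0 with rfl | hy0
        · have : (0:ℝ) ≤ C ^ 2 * ‖S.a (0 : K)‖ := by positivity
          simpa using this
        · have hyn : 0 < ‖y‖ := norm_pos_iff.mpr hy0
          have h3 : ‖y‖ ≤ C * ‖Ts y‖ := by nlinarith [h1, hyn]
          have h4 : ‖y‖ ^ 2 ≤ C ^ 2 * (‖S.a y‖ * ‖y‖) := by nlinarith [h2, h3, hyn, norm_nonneg (Ts y), hC.le]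
          have h5 : ‖y‖ * ‖y‖ ≤ (C ^ 2 * ‖S.a y‖) * ‖y‖ := by
            calc ‖y‖ * ‖y‖ = ‖y‖ ^ 2 := (sq ‖y‖).symm
              _ ≤ C ^ 2 * (‖S.a y‖ * ‖y‖) := h4
              _ = (C ^ 2 * ‖S.a y‖) * ‖y‖ := (mul_assoc _ _ _).symm
          exact le_of_mul_le_mul_right h5 hyn
      have hS0 : 0 ≤ S := Adj11.nonneg_of_form hSsa fun x => by
        rw [hform]; exact CStarModuleRight.inner_self_nonneg
      have hspec : ∀ t ∈ spectrum ℝ S, 0 < t := by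
        intro t ht
        rcases (spectrum_nonneg_of_nonneg hS0 ht).lt_or_eq with h | h
        · exact h
        · exfalso
          have h0 : (0:ℝ) ∈ spectrum ℝ S := h ▸ ht
          set ε : ℝ := (2 * C ^ 2)⁻¹ with hε
          have hεpos : 0 < ε := by positivity
          set f : ℝ → ℝ := fun t => max (1 - t / ε) 0 with hfdef
          have hfc : Continuous f := (continuous_const.sub (continuous_id.div_const ε)).max continuous_const
          set N := cfc f S with hNdef
          have hSN : S * N = cfc (fun t : ℝ => t * f t) S := by
            conv_lhs => rw [← cfc_id ℝ S hSsa]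
            exact (cfc_mul _ _ S continuousOn_id hfc.continuousOn).symm
          have hnorm : ‖S * N‖ ≤ ε := by
            rw [hSN]
            refine norm_cfc_le hεpos.le fun t ht' => ?_
            have ht0' : 0 ≤ t := spectrum_nonneg_of_nonneg hS0 ht'
            rcases le_or_gt t ε with hc | hc
            · have hf1 : f t ≤ 1 := by
                apply max_le _ zero_le_one
                have : 0 ≤ t / ε := div_nonneg ht0' hεpos.le
                linarith
              have hf0 : 0 ≤ f t := le_max_right _ _
              rw [Real.norm_eq_abs, abs_of_nonneg (mul_nonneg ht0' hf0)]
              calc t * f t ≤ t * 1 := by gcongr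
                _ = t := mul_one t
                _ ≤ ε := hc
            · have hft : f t = 0 := by
                apply max_eq_right
                have : 1 - t / ε ≤ 0 := by
                  rw [sub_nonpos, le_div_iff₀ hεpos]
                  nlinarith
                linarith
              simp [hft, hεpos.le]
          have hN1 : 1 ≤ ‖N‖ := by
            have hf01 : f 0 = 1 := by simp [hfdef]
            have := norm_apply_le_norm_cfc f S h0 hfc.continuousOn hSsa
            rw [hf01] at this
            simpa using this
          have hxe : ∃ x : K, (1/2 : ℝ) * ‖x‖ < ‖N.a x‖ := by
            by_contra hcon
            push_neg at hcon
            have : ‖N.a‖ ≤ 1/2 :=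
              ContinuousLinearMap.opNorm_le_bound _ (by norm_num) fun x => hcon x
            have : ‖N‖ ≤ 1/2 := this
            linarith
          obtain ⟨x, hx2⟩ := hxe
          have hc1 : ‖N.a x‖ ≤ C ^ 2 * ‖(S * N).a x‖ := hlow (N.a x)
          have hc2 : ‖(S * N).a x‖ ≤ ε * ‖x‖ := by
            calc ‖(S * N).a x‖ ≤ ‖(S * N).a‖ * ‖x‖ := ((S * N).a).le_opNorm x
              _ ≤ ε * ‖x‖ := by gcongr; exact hnorm
          have hfin : ‖N.a x‖ ≤ (1/2) * ‖x‖ := by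
            have hCe : C ^ 2 * ε = 1/2 := by
              rw [hε]; field_simp
            calc ‖N.a x‖ ≤ C ^ 2 * (ε * ‖x‖) := le_trans hc1 (by gcongr)
              _ = (C ^ 2 * ε) * ‖x‖ := (mul_assoc _ _ _).symm
              _ = (1/2) * ‖x‖ := by rw [hCe]
          linarith
      obtain ⟨r, hr, hrle⟩ := (CFC.exists_pos_algebraMap_le_iff (a := S) hSsa).mpr hspec
      refine ⟨r, hr, fun x => ?_⟩
      have hd : 0 ≤ S - r • 1 := by
        rw [sub_nonneg, ← Algebra.algebraMap_eq_smul_one]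
        exact hrle
      have hform2 := Adj11.form_nonneg_of_nonneg hd x
      rw [hformA (r • 1) x, hsmul1 r x] at hform2
      exact sub_nonneg.mp hform2
    · rintro ⟨r, hr, hforms⟩ y
      have h1sa : IsSelfAdjoint (r • (1 : Adj11 A K)) := by
        have he : (r • (1 : Adj11 A K)) = ((r : ℂ) • (1 : Adj11 A K)) := (Complex.coe_smul r _).symm
        rw [he]
        refine IsSelfAdjoint.smul ?_ (IsSelfAdjoint.one _)
        rw [isSelfAdjoint_iff, Complex.star_def, Complex.conj_ofReal]
      have hd : 0 ≤ S - r • 1 := by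
        refine Adj11.nonneg_of_form (hSsa.sub h1sa) fun x => ?_
        rw [hformA (r • 1) x, hsmul1 r x, sub_nonneg]
        exact hforms x
      have halg : algebraMap ℝ (Adj11 A K) r ≤ S := by
        rw [Algebra.algebraMap_eq_smul_one]
        exact sub_nonneg.mp hd
      have hspec := (CFC.exists_pos_algebraMap_le_iff (a := S) hSsa).mp ⟨r, hr, halg⟩
      have h0 : (0:ℝ) ∉ spectrum ℝ S := fun h => lt_irrefl (0:ℝ) (hspec 0 h)
      have hunit : IsUnit S := spectrum.isUnit_of_zero_notMem (R := ℝ) h0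
      obtain ⟨u, hu⟩ := hunit
      refine ⟨Ts ((↑u⁻¹ : Adj11 A K).a y), ?_⟩
      have h1 : S * ↑u⁻¹ = 1 := by rw [← hu]; exact u.mul_inv
      have h2 : S.a ((↑u⁻¹ : Adj11 A K).a y) = y := by
        calc S.a ((↑u⁻¹ : Adj11 A K).a y) = ((S * ↑u⁻¹).a) y := rfl
          _ = (1 : Adj11 A K).a y := by rw [h1]
          _ = y := rfl
      exact h2
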